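/- Let (q*, p*) be a KKT point of SWO, and let (q(t), p(t)) be a solution trajectory of the primal-dual algorithm with positive update rates k^q_{ij} and k^p_j. Then the La Salle function V(t) = ∑_{i,j} (1/k^q_{ij})·( q_{ij}(t)²/2 − q*_{ij}·q_{ij}(t) ) + ∑_j (1/k^p_j)·( p_j(t)²/2 − p*_j·p_j(t) ) is non-increasing: its derivative satisfies V'(t) ≤ 0 for every t. -/

import Mathlib

/-- A demand matrix is feasible if it is componentwise nonnegative and the
demand to each provider equals its supply. -/
def Feasible {I J : ℕ} (Q : Fin J → ℝ) (q : Fin I → Fin J → ℝ) : Prop :=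
  (∀ i j, 0 ≤ q i j) ∧ ∀ j, ∑ i, q i j = Q j

/-- The effective resource of user `i` under demand matrix `q`. -/
def effRes {I J : ℕ} (c q : Fin I → Fin J → ℝ) (i : Fin I) : ℝ :=
  ∑ j, q i j * c i j

/-- `(q, p)` is a KKT point of SWO. -/
def KKTPoint {I J : ℕ} (u : Fin I → ℝ → ℝ) (Q : Fin J → ℝ)
    (c q : Fin I → Fin J → ℝ) (p : Fin J → ℝ) : Prop :=
  Feasible Q q ∧ (∀ j, 0 < p j) ∧
  (∀ i j, deriv (u i) (effRes c q i) * c i j ≤ p j) ∧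
  (∀ i j, q i j * (deriv (u i) (effRes c q i) * c i j - p j) = 0)

/-- The projection `(x)⁺_y`: equals `x` if `y > 0`, and `max x 0` if `y ≤ 0`. -/
noncomputable def projPlus (x y : ℝ) : ℝ := if 0 < y then x else max x 0

lemma projPlus_mul_le (x y ys : ℝ) (hy : 0 ≤ y) (hys : 0 ≤ ys) :
    (y - ys) * projPlus x y ≤ (y - ys) * x := by
  unfold projPlus
  split_ifs with h
  · exact le_rfl
  · have hy0 : y = 0 := le_antisymm (not_lt.mp h) hy
    rcases le_or_gt 0 x with hx | hx
    · rw [max_eq_left hx]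
    · rw [max_eq_right hx.le, hy0]
      nlinarith

/-- Along any solution trajectory of the primal-dual
algorithm, the La Salle function `V` is non-increasing: `V'(t) ≤ 0`. -/
theorem laSalle_function_nonincreasing
    (I J : ℕ) (hI : 0 < I) (hJ : 0 < J)
    (u : Fin I → ℝ → ℝ)
    (hu_diff : ∀ i, Differentiable ℝ (u i))
    (hu_mono : ∀ i, StrictMono (u i))
    (hu_conc : ∀ i, StrictConcaveOn ℝ Set.univ (u i))
    (Q : Fin J → ℝ) (hQ : ∀ j, 0 < Q j)
    (c : Fin I → Fin J → ℝ) (hc : ∀ i j, 0 < c i j)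
    (qstar : Fin I → Fin J → ℝ) (pstar : Fin J → ℝ)
    (hKKT : KKTPoint u Q c qstar pstar)
    (kq : Fin I → Fin J → ℝ) (hkq : ∀ i j, 0 < kq i j)
    (kp : Fin J → ℝ) (hkp : ∀ j, 0 < kp j)
    (q : ℝ → Fin I → Fin J → ℝ) (p : ℝ → Fin J → ℝ)
    (hqnn : ∀ t i j, 0 ≤ q t i j)
    (hpnn : ∀ t j, 0 ≤ p t j)
    (hqode : ∀ (i : Fin I) (j : Fin J) (t : ℝ),
      HasDerivAt (fun s => q s i j)
        (kq i j * projPlus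
          (deriv (u i) (∑ j', q t i j' * c i j') * c i j - p t j)
          (q t i j)) t)
    (hpode : ∀ (j : Fin J) (t : ℝ),
      HasDerivAt (fun s => p s j)
        (kp j * projPlus ((∑ i, q t i j) - Q j) (p t j)) t) :
    ∀ t : ℝ,
      deriv (fun s =>
        (∑ i, ∑ j, (1 / kq i j) * ((q s i j) ^ 2 / 2 - qstar i j * q s i j)) +
        ∑ j, (1 / kp j) * ((p s j) ^ 2 / 2 - pstar j * p s j)) t ≤ 0 := by
  obtain ⟨⟨hqs_nn, hqs_sum⟩, hps_pos, hkkt1, hkkt2⟩ := hKKT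
  intro t
  -- abbreviations
  set g : Fin I → ℝ := fun i => deriv (u i) (∑ j', q t i j' * c i j') with hg
  set gs : Fin I → ℝ := fun i => deriv (u i) (effRes c qstar i) with hgs
  -- derivative of each primal term
  have hterm : ∀ i j, HasDerivAt
      (fun s => (1 / kq i j) * ((q s i j) ^ 2 / 2 - qstar i j * q s i j))
      ((q t i j - qstar i j) *
        projPlus (g i * c i j - p t j) (q t i j)) t := by
    intro i j
    have hq := hqode i j t
    have h := (((hq.fun_pow 2).div_const 2).fun_sub (hq.const_mul (qstar i j))).const_mul
      (1 / kq i j)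
    refine h.congr_deriv ?_
    have hk : kq i j ≠ 0 := (hkq i j).ne'
    simp only [hg]
    field_simp
    ring
  have hpterm : ∀ j, HasDerivAt
      (fun s => (1 / kp j) * ((p s j) ^ 2 / 2 - pstar j * p s j))
      ((p t j - pstar j) * projPlus ((∑ i, q t i j) - Q j) (p t j)) t := by
    intro j
    have hp := hpode j t
    have h := (((hp.fun_pow 2).div_const 2).fun_sub (hp.const_mul (pstar j))).const_mul
      (1 / kp j)
    refine h.congr_deriv ?_
    have hk : kp j ≠ 0 := (hkp j).ne'
    field_simp
    ring
  have hV : HasDerivAt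
      (fun s =>
        (∑ i, ∑ j, (1 / kq i j) * ((q s i j) ^ 2 / 2 - qstar i j * q s i j)) +
        ∑ j, (1 / kp j) * ((p s j) ^ 2 / 2 - pstar j * p s j))
      ((∑ i, ∑ j, (q t i j - qstar i j) *
          projPlus (g i * c i j - p t j) (q t i j)) +
        ∑ j, (p t j - pstar j) * projPlus ((∑ i, q t i j) - Q j) (p t j)) t := by
    exact (HasDerivAt.fun_sum fun i _ => HasDerivAt.fun_sum fun j _ => hterm i j).add
      (HasDerivAt.fun_sum fun j _ => hpterm j)
  rw [hV.deriv]
  -- bound projections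
  have step1 :
      (∑ i, ∑ j, (q t i j - qstar i j) *
          projPlus (g i * c i j - p t j) (q t i j)) +
        ∑ j, (p t j - pstar j) * projPlus ((∑ i, q t i j) - Q j) (p t j) ≤
      (∑ i, ∑ j, (q t i j - qstar i j) * (g i * c i j - p t j)) +
        ∑ j, (p t j - pstar j) * ((∑ i, q t i j) - Q j) := by
    apply add_le_add
    · apply Finset.sum_le_sum
      intro i _
      apply Finset.sum_le_sum
      intro j _
      exact projPlus_mul_le _ _ _ (hqnn t i j) (hqs_nn i j)
    · apply Finset.sum_le_sum
      intro j _
      exact projPlus_mul_le _ _ _ (hpnn t j) (hps_pos j).le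
  refine le_trans step1 ?_
  -- key algebraic identity, using complementary slackness
  have key : ∀ i j,
      (q t i j - qstar i j) * (g i * c i j - p t j) +
        (p t j - pstar j) * (q t i j - qstar i j) =
      (g i - gs i) * ((q t i j - qstar i j) * c i j) +
        (gs i * c i j - pstar j) * q t i j := by
    intro i j
    have h0 := hkkt2 i j
    rw [hgs]
    linear_combination -h0
  have hsplit :
      (∑ i, ∑ j, (q t i j - qstar i j) * (g i * c i j - p t j)) +
        ∑ j, (p t j - pstar j) * ((∑ i, q t i j) - Q j) =
      (∑ i, (g i - gs i) * ((∑ j, q t i j * c i j) - effRes c qstar i)) +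
        ∑ i, ∑ j, (gs i * c i j - pstar j) * q t i j := by
    have h2 : ∀ j, (p t j - pstar j) * ((∑ i, q t i j) - Q j) =
        ∑ i, (p t j - pstar j) * (q t i j - qstar i j) := by
      intro j
      rw [← Finset.mul_sum, Finset.sum_sub_distrib, hqs_sum j]
    calc (∑ i, ∑ j, (q t i j - qstar i j) * (g i * c i j - p t j)) +
          ∑ j, (p t j - pstar j) * ((∑ i, q t i j) - Q j)
        = ∑ i, ∑ j, ((q t i j - qstar i j) * (g i * c i j - p t j) +
            (p t j - pstar j) * (q t i j - qstar i j)) := by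
          simp only [h2]
          rw [Finset.sum_comm (f := fun j i => (p t j - pstar j) * (q t i j - qstar i j))]
          rw [← Finset.sum_add_distrib]
          refine Finset.sum_congr rfl fun i _ => ?_
          rw [← Finset.sum_add_distrib]
      _ = ∑ i, ∑ j, ((g i - gs i) * ((q t i j - qstar i j) * c i j) +
            (gs i * c i j - pstar j) * q t i j) := by
          simp only [key]
      _ = (∑ i, (g i - gs i) * ((∑ j, q t i j * c i j) - effRes c qstar i)) +
          ∑ i, ∑ j, (gs i * c i j - pstar j) * q t i j := by
          rw [← Finset.sum_add_distrib]
          refine Finset.sum_congr rfl fun i _ => ?_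
          rw [Finset.sum_add_distrib]
          congr 1
          rw [← Finset.mul_sum, effRes, ← Finset.sum_sub_distrib]
          congr 1
          refine Finset.sum_congr rfl fun j _ => ?_
          ring
  rw [hsplit]
  -- both pieces are nonpositive
  have hanti : ∀ i, AntitoneOn (deriv (u i)) (Set.univ : Set ℝ) := by
    intro i
    have := (hu_conc i).concaveOn.antitoneOn_deriv
      (fun x _ => (hu_diff i).differentiableAt)
    simpa using this
  have hpiece1 : ∀ i,
      (g i - gs i) * ((∑ j, q t i j * c i j) - effRes c qstar i) ≤ 0 := by
    intro i
    rcases le_total (∑ j, q t i j * c i j) (effRes c qstar i) with h | h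
    · have h' := hanti i (Set.mem_univ _) (Set.mem_univ _) h
      simp only [hg, hgs]
      nlinarith
    · have h' := hanti i (Set.mem_univ _) (Set.mem_univ _) h
      simp only [hg, hgs]
      nlinarith
  have hpiece2 : ∀ i j, (gs i * c i j - pstar j) * q t i j ≤ 0 := by
    intro i j
    exact mul_nonpos_of_nonpos_of_nonneg (sub_nonpos.mpr (hkkt1 i j)) (hqnn t i j)
  have h1 : (∑ i, (g i - gs i) * ((∑ j, q t i j * c i j) - effRes c qstar i)) ≤ 0 :=
    Finset.sum_nonpos fun i _ => hpiece1 i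
  have h2 : (∑ i, ∑ j, (gs i * c i j - pstar j) * q t i j) ≤ 0 :=
    Finset.sum_nonpos fun i _ => Finset.sum_nonpos fun j _ => hpiece2 i j
  linarith
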